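/- arXiv:1510.02722 — 3 statements merged into one kernel-verified Lean document; each statement's English description precedes it below -/
import Mathlib

section
/- Let ψ₁,…,ψ_k : [0,1] → ℝ^k be totally non-planar functions. Then the set {x = (x₁,…,x_k) ∈ [0,1]^k : det[ψ₁'(x₁),…,ψ_k'(x_k)] = 0} has Lebesgue measure zero, where det[ψ₁'(x₁),…,ψ_k'(x_k)] denotes the determinant of the k×k matrix whose i-th column is ψᵢ'(xᵢ). -/
open MeasureTheory

/-- The derivative of a curve `ψ : [0,1] → ℝ^k` (derivative within `[0,1]`). -/
noncomputable def curveDeriv (k : ℕ) (ψ : ℝ → (Fin k → ℝ)) (s : ℝ) : Fin k → ℝ :=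
  derivWithin ψ (Set.Icc 0 1) s

/-- A function `ψ : [0,1] → ℝ^k` is totally non-planar if it is `C¹` and for every
nonzero `v ∈ ℝ^k` the set `{s ∈ [0,1] : ψ'(s)·v = 0}` has Lebesgue measure zero. -/
def TotallyNonPlanar (k : ℕ) (ψ : ℝ → (Fin k → ℝ)) : Prop :=
  ContDiffOn ℝ 1 ψ (Set.Icc 0 1) ∧
    ∀ v : Fin k → ℝ, v ≠ 0 →
      volume {s : ℝ | s ∈ Set.Icc (0:ℝ) 1 ∧ ∑ i, curveDeriv k ψ s i * v i = 0} = 0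

namespace Stmt4Aux

open Set

/-- Linear dependence of a finite family of vectors, phrased concretely. -/
def Dep {n k : ℕ} (u : Fin n → Fin k → ℝ) : Prop :=
  ∃ c : Fin n → ℝ, c ≠ 0 ∧ ∑ i, c i • u i = 0

/-- The Gram determinant criterion for linear dependence. -/
lemma dep_iff_gram {n k : ℕ} (u : Fin n → Fin k → ℝ) :
    Dep u ↔ (Matrix.of fun i j => ∑ p, u i p * u j p).det = 0 := by
  rw [← Matrix.exists_mulVec_eq_zero_iff]
  constructor
  · rintro ⟨c, hc, hsum⟩
    refine ⟨c, hc, ?_⟩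
    funext i
    have hp : ∀ p, ∑ j, c j * u j p = 0 := by
      intro p
      have := congrFun hsum p
      simpa [Finset.sum_apply] using this
    calc (Matrix.of fun i j => ∑ p, u i p * u j p).mulVec c i
        = ∑ j, (∑ p, u i p * u j p) * c j := rfl
      _ = ∑ p, u i p * (∑ j, c j * u j p) := by
          simp_rw [Finset.sum_mul, Finset.mul_sum]
          rw [Finset.sum_comm]
          exact Finset.sum_congr rfl fun p _ => Finset.sum_congr rfl fun j _ => by ring
      _ = 0 := by simp [hp]
  · rintro ⟨c, hc, hmul⟩
    refine ⟨c, hc, ?_⟩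
    set v : Fin k → ℝ := fun p => ∑ j, c j * u j p with hv
    have hGi : ∀ i, ∑ p, u i p * v p = 0 := by
      intro i
      have := congrFun hmul i
      calc ∑ p, u i p * v p
          = ∑ j, (∑ p, u i p * u j p) * c j := by
            simp_rw [hv, Finset.sum_mul, Finset.mul_sum]
            rw [Finset.sum_comm]
            exact Finset.sum_congr rfl fun p _ => Finset.sum_congr rfl fun j _ => by ring
        _ = 0 := this
    have hsq : ∑ p, v p * v p = 0 := by
      calc ∑ p, v p * v p
          = ∑ i, c i * (∑ p, u i p * v p) := by
            simp_rw [Finset.mul_sum]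
            rw [Finset.sum_comm]
            refine Finset.sum_congr rfl fun p _ => ?_
            simp_rw [hv, Finset.sum_mul]
            exact Finset.sum_congr rfl fun i _ => by ring
        _ = 0 := by simp [hGi]
    have hv0 : ∀ p, v p = 0 := by
      intro p
      have h := (Finset.sum_eq_zero_iff_of_nonneg
        (fun q _ => mul_self_nonneg (v q))).1 hsq p (Finset.mem_univ p)
      exact mul_self_eq_zero.mp h
    funext p
    have := hv0 p
    simpa [Finset.sum_apply, hv, mul_comm] using this

/-- The "dependent derivatives" set is closed (hence measurable). -/
lemma isClosed_depSet {k n : ℕ} (φ : Fin n → ℝ → (Fin k → ℝ))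
    (hφ : ∀ i, ContDiffOn ℝ 1 (φ i) (Set.Icc 0 1)) :
    IsClosed {x : Fin n → ℝ | (∀ i, x i ∈ Set.Icc (0:ℝ) 1) ∧
      Dep fun i => curveDeriv k (φ i) (x i)} := by
  have hbox : IsClosed (Set.pi Set.univ fun _ : Fin n => Set.Icc (0:ℝ) 1) :=
    isClosed_set_pi fun i _ => isClosed_Icc
  have hu : ∀ i : Fin n, ContinuousOn (fun x : Fin n → ℝ => curveDeriv k (φ i) (x i))
      (Set.pi Set.univ fun _ : Fin n => Set.Icc (0:ℝ) 1) := by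
    intro i
    have h1 : ContinuousOn (derivWithin (φ i) (Set.Icc 0 1)) (Set.Icc (0:ℝ) 1) :=
      (hφ i).continuousOn_derivWithin (uniqueDiffOn_Icc one_pos) le_rfl
    exact h1.comp ((continuous_apply i).continuousOn) fun x hx => hx i trivial
  have hf : ContinuousOn (fun x : Fin n → ℝ =>
      (Matrix.of fun i j => ∑ p, curveDeriv k (φ i) (x i) p * curveDeriv k (φ j) (x j) p).det)
      (Set.pi Set.univ fun _ : Fin n => Set.Icc (0:ℝ) 1) := by
    have : ContinuousOn (fun x : Fin n → ℝ =>
        (Matrix.of fun (i j : Fin n) =>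
          ∑ p, curveDeriv k (φ i) (x i) p * curveDeriv k (φ j) (x j) p))
        (Set.pi Set.univ fun _ : Fin n => Set.Icc (0:ℝ) 1) := by
      refine continuousOn_pi.mpr ?_
      intro i
      refine continuousOn_pi.mpr ?_
      intro j
      show ContinuousOn (fun x : Fin n → ℝ =>
        ∑ p, curveDeriv k (φ i) (x i) p * curveDeriv k (φ j) (x j) p)
        (Set.pi Set.univ fun _ : Fin n => Set.Icc (0:ℝ) 1)
      exact continuousOn_finset_sum Finset.univ fun p _ =>
        ((continuous_apply p).comp_continuousOn (hu i)).mul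
          ((continuous_apply p).comp_continuousOn (hu j))
    exact Continuous.comp_continuousOn continuous_id.matrix_det this
  have : {x : Fin n → ℝ | (∀ i, x i ∈ Set.Icc (0:ℝ) 1) ∧
      Dep fun i => curveDeriv k (φ i) (x i)} =
      (Set.pi Set.univ fun _ : Fin n => Set.Icc (0:ℝ) 1) ∩
        ((fun x : Fin n → ℝ =>
          (Matrix.of fun i j =>
            ∑ p, curveDeriv k (φ i) (x i) p * curveDeriv k (φ j) (x j) p).det) ⁻¹' {0}) := by
    ext x
    simp only [Set.mem_setOf_eq, Set.mem_inter_iff, Set.mem_pi, Set.mem_univ, forall_true_left,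
      Set.mem_preimage, Set.mem_singleton_iff]
    rw [dep_iff_gram]
  rw [this]
  exact hf.preimage_isClosed_of_isClosed hbox isClosed_singleton

/-- Main induction: the set of parameter tuples where the derivative vectors of
`n ≤ k` totally non-planar curves are linearly dependent is Lebesgue-null. -/
lemma main {k : ℕ} : ∀ n, n ≤ k → ∀ φ : Fin n → ℝ → (Fin k → ℝ),
    (∀ i, TotallyNonPlanar k (φ i)) →
    volume {x : Fin n → ℝ | (∀ i, x i ∈ Set.Icc (0:ℝ) 1) ∧
      Dep fun i => curveDeriv k (φ i) (x i)} = 0 := by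
  intro n
  induction n with
  | zero =>
    intro _ φ _
    have : {x : Fin 0 → ℝ | (∀ i, x i ∈ Set.Icc (0:ℝ) 1) ∧
        Dep fun i => curveDeriv k (φ i) (x i)} = ∅ := by
      ext x
      simp only [Set.mem_setOf_eq, Set.mem_empty_iff_false, iff_false, not_and]
      rintro - ⟨c, hc, -⟩
      exact hc (Subsingleton.elim c 0)
    rw [this, measure_empty]
  | succ n ih =>
    intro hn φ hφ
    classical
    set S : Set (Fin (n + 1) → ℝ) := {x | (∀ i, x i ∈ Set.Icc (0:ℝ) 1) ∧
      Dep fun i => curveDeriv k (φ i) (x i)} with hSdef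
    have hSm : MeasurableSet S := (isClosed_depSet φ fun i => (hφ i).1).measurableSet
    set e := MeasurableEquiv.piFinSuccAbove (fun _ : Fin (n + 1) => ℝ) 0 with he
    have hep : MeasurePreserving (⇑e.symm) volume volume :=
      (volume_preserving_piFinSuccAbove (fun _ : Fin (n + 1) => ℝ) 0).symm
    have h1 : volume (e.symm ⁻¹' S) = volume S :=
      hep.measure_preimage hSm.nullMeasurableSet
    rw [← h1, Measure.volume_eq_prod,
      Measure.prod_apply_symm (e.symm.measurable hSm)]
    -- the null set coming from the inductive hypothesis
    have hNull := ih (Nat.le_of_succ_le hn) (fun i => φ i.succ) (fun i => hφ i.succ)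
    have hae : ∀ᵐ y : Fin n → ℝ,
        y ∉ {x : Fin n → ℝ | (∀ i, x i ∈ Set.Icc (0:ℝ) 1) ∧
          Dep fun i => curveDeriv k (φ i.succ) (x i)} :=
      measure_eq_zero_iff_ae_notMem.mp hNull
    rw [← lintegral_zero]
    apply lintegral_congr_ae
    filter_upwards [hae] with y hy
    show volume ((fun a : ℝ => (a, y)) ⁻¹' (e.symm ⁻¹' S)) = 0
    -- description of the slice
    have hzsucc : ∀ (a : ℝ) (j : Fin n), Fin.cons (α := fun _ => ℝ) a y j.succ = y j :=
      fun a j => by simp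
    have hslice : ∀ a : ℝ, (a, y) ∈ e.symm ⁻¹' S ↔
        ((a ∈ Set.Icc (0:ℝ) 1 ∧ ∀ j : Fin n, y j ∈ Set.Icc (0:ℝ) 1) ∧
          Dep fun i => curveDeriv k (φ i) (Fin.cons (α := fun _ => ℝ) a y i)) := by
      intro a
      have hz : e.symm (a, y) = Fin.cons (α := fun _ => ℝ) a y := by
        simp [he, MeasurableEquiv.piFinSuccAbove_symm_apply, Fin.insertNthEquiv,
          Fin.consEquiv]
      simp only [Set.mem_preimage, hz, hSdef, Set.mem_setOf_eq]
      constructor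
      · rintro ⟨hb, hd⟩
        refine ⟨⟨by simpa using hb 0, fun j => by simpa [hzsucc a j] using hb j.succ⟩, hd⟩
      · rintro ⟨⟨h0, hs⟩, hd⟩
        refine ⟨fun i => ?_, hd⟩
        refine Fin.cases ?_ ?_ i
        · simpa using h0
        · intro j; simpa [hzsucc a j] using hs j
    by_cases hybox : ∀ j : Fin n, y j ∈ Set.Icc (0:ℝ) 1
    · -- the tail derivative vectors
      set v : Fin n → Fin k → ℝ := fun i => curveDeriv k (φ i.succ) (y i) with hv
      have hdep : ¬ Dep v := fun hd => hy ⟨hybox, hd⟩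
      -- construct the orthogonal functional
      set L := WithLp.linearEquiv 2 ℝ (Fin k → ℝ) with hL
      set W : Submodule ℝ (EuclideanSpace ℝ (Fin k)) :=
        Submodule.span ℝ (Set.range fun i => L.symm (v i)) with hW
      have hWlt : W < ⊤ := by
        apply span_lt_top_of_card_lt_finrank
        have h2 : (Set.range fun i => L.symm (v i)).toFinset.card ≤ n := by
          rw [Set.toFinset_card]
          exact (Fintype.card_range_le _).trans (by simp)
        have h3 : Module.finrank ℝ (EuclideanSpace ℝ (Fin k)) = k := by
          simp [finrank_euclideanSpace]
        omega
      have hWbot : Wᗮ ≠ ⊥ := fun hbot =>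
        hWlt.ne (Submodule.orthogonal_eq_bot_iff.mp hbot)
      obtain ⟨w, hwW, hw0⟩ := (Submodule.ne_bot_iff _).mp hWbot
      have hw'0 : L w ≠ 0 := by
        intro hcon
        apply hw0
        rw [← L.symm_apply_apply w, hcon, map_zero]
      refine measure_mono_null ?_ ((hφ 0).2 (L w) hw'0)
      intro a ha
      rw [Set.mem_preimage, hslice a] at ha
      obtain ⟨⟨ha01, -⟩, c, hc, hsum⟩ := ha
      have hz0 : Fin.cons (α := fun _ => ℝ) a y 0 = a := by simp
      rw [Fin.sum_univ_succ] at hsum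
      simp only [hz0] at hsum
      have hsum' : c 0 • curveDeriv k (φ 0) a + ∑ j : Fin n, c j.succ • v j = 0 := by
        simp only [hzsucc] at hsum
        exact hsum
      have hc0 : c 0 ≠ 0 := by
        intro h0
        apply hdep
        refine ⟨fun j => c j.succ, ?_, ?_⟩
        · intro hcs
          apply hc
          funext i
          refine Fin.cases ?_ ?_ i
          · exact h0
          · intro j; exact congrFun hcs j
        · rw [h0, zero_smul, zero_add] at hsum'
          exact hsum'
      have hu0 : curveDeriv k (φ 0) a = ∑ j : Fin n, ((c 0)⁻¹ * -c j.succ) • v j := by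
        have h1 : c 0 • curveDeriv k (φ 0) a = -∑ j : Fin n, c j.succ • v j :=
          eq_neg_of_add_eq_zero_left hsum'
        have h2 : curveDeriv k (φ 0) a = (c 0)⁻¹ • (c 0 • curveDeriv k (φ 0) a) := by
          rw [smul_smul, inv_mul_cancel₀ hc0, one_smul]
        rw [h2, h1, ← Finset.sum_neg_distrib, Finset.smul_sum]
        refine Finset.sum_congr rfl fun j _ => ?_
        rw [← neg_smul, smul_smul]
      have hmem : L.symm (curveDeriv k (φ 0) a) ∈ W := by
        rw [hu0, map_sum]
        refine Submodule.sum_mem _ fun j _ => ?_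
        rw [_root_.map_smul]
        exact Submodule.smul_mem _ _ (Submodule.subset_span ⟨j, rfl⟩)
      have hinner : (inner ℝ (L.symm (curveDeriv k (φ 0) a)) w : ℝ) = 0 :=
        Submodule.inner_right_of_mem_orthogonal hmem hwW
      refine ⟨ha01, ?_⟩
      rw [← hinner, PiLp.inner_apply]
      simp only [RCLike.inner_apply, starRingEnd_apply, star_trivial, hL]
      exact Finset.sum_congr rfl fun i _ => mul_comm _ _
    · -- the slice is empty
      have : (fun a : ℝ => (a, y)) ⁻¹' (e.symm ⁻¹' S) = ∅ := by
        ext a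
        simp only [Set.mem_empty_iff_false, iff_false]
        intro hmem
        exact hybox ((hslice a).mp hmem).1.2
      rw [this, measure_empty]

end Stmt4Aux

/-- If `ψ₁, …, ψ_k : [0,1] → ℝ^k` are totally non-planar, then the set of
`x ∈ [0,1]^k` where `det [ψ₁'(x₁), …, ψ_k'(x_k)] = 0` has Lebesgue measure zero. -/
theorem stmt4 (k : ℕ) (ψ : Fin k → ℝ → (Fin k → ℝ))
    (h : ∀ i, TotallyNonPlanar k (ψ i)) :
    volume {x : Fin k → ℝ | (∀ i, x i ∈ Set.Icc (0:ℝ) 1) ∧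
      (Matrix.of fun p i => curveDeriv k (ψ i) (x i) p).det = 0} = 0 := by
  have hmain := Stmt4Aux.main k le_rfl ψ h
  have hset : {x : Fin k → ℝ | (∀ i, x i ∈ Set.Icc (0:ℝ) 1) ∧
      (Matrix.of fun p i => curveDeriv k (ψ i) (x i) p).det = 0} =
      {x : Fin k → ℝ | (∀ i, x i ∈ Set.Icc (0:ℝ) 1) ∧
        Stmt4Aux.Dep fun i => curveDeriv k (ψ i) (x i)} := by
    ext x
    simp only [Set.mem_setOf_eq, and_congr_right_iff]
    intro _
    rw [← Matrix.exists_mulVec_eq_zero_iff]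
    constructor <;> rintro ⟨c, hc, hsum⟩ <;> refine ⟨c, hc, ?_⟩
    · funext p
      have := congrFun hsum p
      simpa [Matrix.mulVec, dotProduct, Finset.sum_apply, mul_comm] using this
    · funext p
      have := congrFun hsum p
      simpa [Matrix.mulVec, dotProduct, Finset.sum_apply, mul_comm] using this
  rw [hset, hmain]
end

section
/- Let ψ₁,…,ψ_k : [0,1] → ℝ^k be totally non-planar functions. Then for every i ∈ {1,…,k}, for Lebesgue-almost every y = (y₁,…,yᵢ) ∈ [0,1]^i, the subspace ℝ-span{ψ₁'(y₁),…,ψᵢ'(yᵢ)} of ℝ^k has dimension i. -/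
open MeasureTheory

lemma exists_orth {k : ℕ} (p : Submodule ℝ (Fin k → ℝ)) (hp : p ≠ ⊤) :
    ∃ v : Fin k → ℝ, v ≠ 0 ∧ ∀ u ∈ p, ∑ l, u l * v l = 0 := by
  obtain ⟨f, hf, hf'⟩ := p.exists_dual_map_eq_bot_of_lt_top (lt_top_iff_ne_top.2 hp) inferInstance
  have key : ∀ u : Fin k → ℝ, f u = ∑ l, u l * f (Pi.single l 1) := by
    intro u
    have hu : u = ∑ l, u l • (Pi.single l 1 : Fin k → ℝ) := by
      ext j
      simp [Pi.single_apply, Finset.sum_apply]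
    conv_lhs => rw [hu]
    rw [map_sum]
    simp [smul_eq_mul]
  refine ⟨fun l => f (Pi.single l 1), ?_, ?_⟩
  · intro hv
    apply hf
    apply LinearMap.ext
    intro u
    rw [key u]
    simp only [LinearMap.zero_apply]
    have : ∀ l, f (Pi.single l (1:ℝ)) = 0 := fun l => congrFun hv l
    simp [this]
  · intro u hu
    have h0 : f u = 0 := by
      have : f u ∈ p.map f := Submodule.mem_map_of_mem hu
      rw [hf'] at this
      simpa using this
    rw [← key u, h0]

lemma bad_closed {n k : ℕ} (w : Fin n → ℝ → (Fin k → ℝ))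
    (hw : ∀ j, ContinuousOn (w j) (Set.Icc 0 1)) :
    IsClosed {y : Fin n → ℝ | (∀ j, y j ∈ Set.Icc (0:ℝ) 1) ∧
      ¬ LinearIndependent ℝ (fun j => w j (y j))} := by
  have hbox : IsClosed {y : Fin n → ℝ | ∀ j, y j ∈ Set.Icc (0:ℝ) 1} := by
    have : {y : Fin n → ℝ | ∀ j, y j ∈ Set.Icc (0:ℝ) 1}
        = Set.pi Set.univ (fun _ => Set.Icc (0:ℝ) 1) := by
      ext y; simp [Set.mem_pi, Pi.le_def, forall_and]
    rw [this]
    exact isClosed_set_pi fun j _ => isClosed_Icc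
  have hF : ContinuousOn (fun y : Fin n → ℝ => fun j => w j (y j))
      {y : Fin n → ℝ | ∀ j, y j ∈ Set.Icc (0:ℝ) 1} := by
    apply continuousOn_pi.2
    intro j
    exact (hw j).comp (continuous_apply j).continuousOn (fun y hy => hy j)
  have := hF.preimage_isClosed_of_isClosed hbox
    (isOpen_setOf_linearIndependent (𝕜 := ℝ)).isClosed_compl
  exact this

lemma key {k : ℕ} : ∀ (n : ℕ), n ≤ k → ∀ w : Fin n → ℝ → (Fin k → ℝ),
    (∀ j, ContinuousOn (w j) (Set.Icc 0 1)) →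
    (∀ j, ∀ v : Fin k → ℝ, v ≠ 0 →
      volume {s : ℝ | s ∈ Set.Icc (0:ℝ) 1 ∧ ∑ l, w j s l * v l = 0} = 0) →
    volume {y : Fin n → ℝ | (∀ j, y j ∈ Set.Icc (0:ℝ) 1) ∧
      ¬ LinearIndependent ℝ (fun j => w j (y j))} = 0 := by
  intro n
  induction n with
  | zero =>
    intro _ w _ _
    have hempty : {y : Fin 0 → ℝ | (∀ j, y j ∈ Set.Icc (0:ℝ) 1) ∧
        ¬ LinearIndependent ℝ (fun j => w j (y j))} = ∅ := by
      apply Set.eq_empty_of_forall_notMem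
      intro y hy
      exact hy.2 linearIndependent_empty_type
    rw [hempty, measure_empty]
  | succ n ih =>
    intro hnk w hw hv
    have hnk' : n ≤ k := Nat.le_of_succ_le hnk
    set w' : Fin n → ℝ → (Fin k → ℝ) := fun j => w j.castSucc with hw'def
    have hA' : volume {y : Fin n → ℝ | (∀ j, y j ∈ Set.Icc (0:ℝ) 1) ∧
        ¬ LinearIndependent ℝ (fun j => w' j (y j))} = 0 :=
      ih hnk' w' (fun j => hw j.castSucc) (fun j => hv j.castSucc)
    set A' : Set (Fin n → ℝ) := {y : Fin n → ℝ | (∀ j, y j ∈ Set.Icc (0:ℝ) 1) ∧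
        ¬ LinearIndependent ℝ (fun j => w' j (y j))} with hA'def
    have hA'meas : MeasurableSet A' :=
      (bad_closed w' (fun j => hw j.castSucc)).measurableSet
    set e := MeasurableEquiv.piFinSuccAbove (fun _ : Fin (n+1) => ℝ) (Fin.last n) with hedef
    have hmp : MeasurePreserving e volume volume :=
      volume_preserving_piFinSuccAbove (fun _ : Fin (n+1) => ℝ) (Fin.last n)
    -- the full bad set
    set B : Set (Fin (n+1) → ℝ) := {y : Fin (n+1) → ℝ | (∀ j, y j ∈ Set.Icc (0:ℝ) 1) ∧
        ¬ LinearIndependent ℝ (fun j => w j (y j))} with hBdef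
    have hBmeas : MeasurableSet B := (bad_closed w hw).measurableSet
    -- S1 : preimage of univ ×ˢ A'
    set S1 : Set (Fin (n+1) → ℝ) := e ⁻¹' ((Set.univ : Set ℝ) ×ˢ A') with hS1def
    -- D : pullback of A' along castSucc-restriction
    set D : Set (Fin (n+1) → ℝ) :=
      (fun y : Fin (n+1) → ℝ => fun j : Fin n => y j.castSucc) ⁻¹' A' with hDdef
    have hDmeas : MeasurableSet D := by
      apply MeasurableSet.preimage hA'meas
      exact measurable_pi_iff.2 fun j => measurable_pi_apply _
    set S2 : Set (Fin (n+1) → ℝ) := B \ D with hS2def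
    have hS2meas : MeasurableSet S2 := hBmeas.diff hDmeas
    -- B ⊆ S1 ∪ S2
    have hsub : B ⊆ S1 ∪ S2 := by
      intro y hy
      by_cases hd : (fun j : Fin n => y j.castSucc) ∈ A'
      · left
        simp only [hS1def, Set.mem_preimage, Set.mem_prod, Set.mem_univ, true_and]
        have : (e y).2 = fun j : Fin n => y j.castSucc := by
          funext j
          show y ((Fin.last n).succAbove j) = y j.castSucc
          rw [Fin.succAbove_last]
        rw [this]
        exact hd
      · right
        exact ⟨hy, hd⟩
    -- volume S1 = 0
    have hS1 : volume S1 = 0 := by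
      rw [hS1def, hmp.measure_preimage
        ((MeasurableSet.univ.prod hA'meas).nullMeasurableSet)]
      rw [Measure.volume_eq_prod, Measure.prod_prod, hA', mul_zero]
    -- volume S2 = 0
    have hS2 : volume S2 = 0 := by
      set T : Set (ℝ × (Fin n → ℝ)) := e.symm ⁻¹' S2 with hTdef
      have hTmeas : MeasurableSet T := e.symm.measurable hS2meas
      have hS2T : S2 = e ⁻¹' T := by
        rw [hTdef, ← Set.preimage_comp]
        simp
      rw [hS2T, hmp.measure_preimage hTmeas.nullMeasurableSet]
      rw [Measure.volume_eq_prod, Measure.prod_apply_symm hTmeas]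
      have hslice : ∀ y' : Fin n → ℝ, volume ((fun t : ℝ => (t, y')) ⁻¹' T) = 0 := by
        intro y'
        have hesymm : ∀ t : ℝ, e.symm (t, y') = Fin.snoc y' t := by
          intro t
          show (Fin.insertNthEquiv (fun _ : Fin (n+1) => ℝ) (Fin.last n)) (t, y') = _
          simp [Fin.insertNthEquiv, Fin.insertNth_last']
        by_cases hind : LinearIndependent ℝ (fun j : Fin n => w' j (y' j))
        · -- independent case : use orthogonal vector
          have hne : Submodule.span ℝ (Set.range fun j : Fin n => w' j (y' j)) ≠ ⊤ := by
            intro htop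
            have h1 : Module.finrank ℝ (Submodule.span ℝ
                (Set.range fun j : Fin n => w' j (y' j))) = n := by
              rw [finrank_span_eq_card hind, Fintype.card_fin]
            rw [htop, finrank_top] at h1
            have : Module.finrank ℝ (Fin k → ℝ) = k := by
              simp [Module.finrank_pi]
            omega
          obtain ⟨v, hv0, hvorth⟩ := exists_orth _ hne
          apply measure_mono_null _ (hv (Fin.last n) v hv0)
          intro t ht
          rw [hTdef] at ht
          simp only [Set.mem_preimage] at ht
          rw [hesymm t] at ht
          obtain ⟨⟨hbox, hdep⟩, _⟩ := ht
          have htIcc : t ∈ Set.Icc (0:ℝ) 1 := by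
            have := hbox (Fin.last n)
            rwa [Fin.snoc_last] at this
          have hfsnoc : (fun j : Fin (n+1) => w j ((Fin.snoc y' t : Fin (n+1) → ℝ) j))
              = Fin.snoc (fun j : Fin n => w' j (y' j)) (w (Fin.last n) t) := by
            funext j
            refine Fin.lastCases ?_ ?_ j
            · rw [Fin.snoc_last, Fin.snoc_last]
            · intro j'
              rw [Fin.snoc_castSucc, Fin.snoc_castSucc]
          rw [hfsnoc] at hdep
          rw [linearIndependent_fin_snoc] at hdep
          have hmem : w (Fin.last n) t ∈ Submodule.span ℝ
              (Set.range fun j : Fin n => w' j (y' j)) := by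
            rcases not_and_or.mp hdep with h1 | h2
            · exact absurd hind h1
            · exact not_not.mp h2
          exact ⟨htIcc, hvorth _ hmem⟩
        · -- dependent case : slice is empty
          have : (fun t : ℝ => (t, y')) ⁻¹' T = ∅ := by
            apply Set.eq_empty_of_forall_notMem
            intro t ht
            rw [hTdef] at ht
            simp only [Set.mem_preimage] at ht
            rw [hesymm t] at ht
            obtain ⟨⟨hbox, _⟩, hnd⟩ := ht
            apply hnd
            rw [hDdef]
            simp only [Set.mem_preimage]
            show (fun j : Fin n => (Fin.snoc y' t : Fin (n+1) → ℝ) j.castSucc) ∈ A'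
            have hcs : (fun j : Fin n => (Fin.snoc y' t : Fin (n+1) → ℝ) j.castSucc) = y' := by
              funext j
              rw [Fin.snoc_castSucc]
            rw [hcs]
            refine ⟨fun j => ?_, hind⟩
            have := hbox j.castSucc
            rwa [Fin.snoc_castSucc] at this
          rw [this, measure_empty]
      simp only [hslice, lintegral_zero]
    exact measure_mono_null hsub (measure_union_null hS1 hS2)

/-- If `ψ₁, …, ψ_k : [0,1] → ℝ^k` are totally non-planar, then for every
`i ∈ {1, …, k}` and Lebesgue-almost every `y ∈ [0,1]^i`, the span of
`ψ₁'(y₁), …, ψᵢ'(yᵢ)` has dimension `i`. -/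
theorem stmt5 (k : ℕ) (ψ : Fin k → ℝ → (Fin k → ℝ))
    (h : ∀ i, TotallyNonPlanar k (ψ i)) (i : ℕ) (hi1 : 1 ≤ i) (hik : i ≤ k) :
    ∀ᵐ y : Fin i → ℝ ∂(volume.restrict {y : Fin i → ℝ | ∀ j, y j ∈ Set.Icc (0:ℝ) 1}),
      Module.finrank ℝ (Submodule.span ℝ
        (Set.range fun j : Fin i => curveDeriv k (ψ (Fin.castLE hik j)) (y j))) = i := by
  have hbox : MeasurableSet {y : Fin i → ℝ | ∀ j, y j ∈ Set.Icc (0:ℝ) 1} := by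
    have : {y : Fin i → ℝ | ∀ j, y j ∈ Set.Icc (0:ℝ) 1}
        = Set.pi Set.univ (fun _ => Set.Icc (0:ℝ) 1) := by
      ext y; simp [Set.mem_pi, Pi.le_def, forall_and]
    rw [this]
    exact MeasurableSet.univ_pi fun j => measurableSet_Icc
  rw [ae_restrict_iff' hbox, ae_iff]
  set w : Fin i → ℝ → (Fin k → ℝ) := fun j => curveDeriv k (ψ (Fin.castLE hik j)) with hwdef
  have hcont : ∀ j, ContinuousOn (w j) (Set.Icc 0 1) := fun j =>
    ((h (Fin.castLE hik j)).1).continuousOn_derivWithin uniqueDiffOn_Icc_zero_one le_rfl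
  have hnull : ∀ j, ∀ v : Fin k → ℝ, v ≠ 0 →
      volume {s : ℝ | s ∈ Set.Icc (0:ℝ) 1 ∧ ∑ l, w j s l * v l = 0} = 0 := fun j v hv =>
    (h (Fin.castLE hik j)).2 v hv
  apply measure_mono_null _ (key i hik w hcont hnull)
  intro y hy
  simp only [Set.mem_setOf_eq] at hy ⊢
  push_neg at hy
  refine ⟨hy.1, fun hind => hy.2 ?_⟩
  rw [finrank_span_eq_card hind, Fintype.card_fin]
end

section
/- Let ψ₁,…,ψ_k : [0,1] → ℝ^k be totally non-planar functions and let M₁,…,M_k ∈ GL(k,ℝ). Define Ψ : [0,1]^k → ℝ^k by Ψ(t₁,…,t_k) = Σ_{i=1}^k Mᵢψᵢ(tᵢ). Then the pushforward measure Ψ_*λ_{[0,1]^k} of Lebesgue measure on [0,1]^k is absolutely continuous with respect to Lebesgue measure on ℝ^k. -/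
open MeasureTheory

/-! ### Auxiliary material -/

section Aux

open Set Matrix

variable {k : ℕ}

/-- An auxiliary predicate: `w` is continuous on `[0,1]` and for every nonzero `v` the set
where `w(s) · v = 0` is null. -/
def GoodCurve (k : ℕ) (w : ℝ → Fin k → ℝ) : Prop :=
  ContinuousOn w (Set.Icc 0 1) ∧
    ∀ v : Fin k → ℝ, v ≠ 0 →
      volume {s : ℝ | s ∈ Set.Icc (0:ℝ) 1 ∧ ∑ j, w s j * v j = 0} = 0

lemma dual_apply_eq_sum (φ : Module.Dual ℝ (Fin k → ℝ)) (z : Fin k → ℝ) :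
    φ z = ∑ j, z j * φ (Pi.single j 1) := by
  have hz : z = ∑ j, z j • (Pi.single j 1 : Fin k → ℝ) := by
    funext r
    rw [Finset.sum_apply]
    simp [Pi.single_apply]
  conv_lhs => rw [hz]
  rw [map_sum]
  simp [smul_eq_mul]

/-- If `m < k`, any family of `m` vectors in `ℝ^k` admits a nonzero vector orthogonal
(w.r.t. the coordinate pairing) to its span. -/
lemma exists_perp {m : ℕ} (hmk : m < k) (g : Fin m → (Fin k → ℝ)) :
    ∃ v : Fin k → ℝ, v ≠ 0 ∧
      ∀ z ∈ Submodule.span ℝ (Set.range g), ∑ j, z j * v j = 0 := by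
  have h1 : Module.finrank ℝ (Submodule.span ℝ (Set.range g)) ≤ m := by
    simpa [Set.finrank] using finrank_range_le_card (R := ℝ) g
  have h2 : Module.finrank ℝ (Fin k → ℝ) = k := by simp
  have hlt : Submodule.span ℝ (Set.range g) < ⊤ := by
    apply Submodule.lt_top_of_finrank_lt_finrank
    rw [h2]
    exact lt_of_le_of_lt h1 hmk
  obtain ⟨φ, hφ0, hφ⟩ := Submodule.exists_dual_map_eq_bot_of_lt_top hlt inferInstance
  refine ⟨fun j => φ (Pi.single j 1), ?_, ?_⟩
  · intro hv
    apply hφ0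
    refine LinearMap.ext fun z => ?_
    rw [LinearMap.zero_apply, dual_apply_eq_sum]
    have : ∀ j, φ (Pi.single j (1:ℝ)) = 0 := fun j => congrFun hv j
    simp [this]
  · intro z hz
    rw [← dual_apply_eq_sum]
    have hmem : φ z ∈ (Submodule.span ℝ (Set.range g)).map φ := Submodule.mem_map_of_mem hz
    rw [hφ] at hmem
    exact (Submodule.mem_bot ℝ).1 hmem

lemma mulVec_eq_sum_smul {m : ℕ} (u : Fin m → (Fin k → ℝ)) (c : Fin m → ℝ) :
    (Matrix.of fun r i => u i r).mulVec c = ∑ i, c i • u i := by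
  funext r
  rw [Finset.sum_apply]
  simp [Matrix.mulVec, dotProduct, mul_comm]

/-- Linear independence is equivalent to nonvanishing of the Gram determinant. -/
lemma li_iff_gram {m : ℕ} (u : Fin m → (Fin k → ℝ)) :
    LinearIndependent ℝ u ↔
      ((Matrix.of fun r i => u i r)ᵀ * (Matrix.of fun r i => u i r)).det ≠ 0 := by
  set A : Matrix (Fin k) (Fin m) ℝ := Matrix.of fun r i => u i r with hA
  have key : ∀ c : Fin m → ℝ, (Aᵀ * A).mulVec c = 0 ↔ A.mulVec c = 0 := by
    intro c
    constructor
    · intro hc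
      have h2 : A.mulVec c ⬝ᵥ A.mulVec c = 0 := by
        calc A.mulVec c ⬝ᵥ A.mulVec c = Matrix.vecMul c Aᵀ ⬝ᵥ A.mulVec c := by
              rw [Matrix.vecMul_transpose]
          _ = c ⬝ᵥ Aᵀ.mulVec (A.mulVec c) := (Matrix.dotProduct_mulVec c Aᵀ (A.mulVec c)).symm
          _ = c ⬝ᵥ (Aᵀ * A).mulVec c := by rw [Matrix.mulVec_mulVec]
          _ = 0 := by rw [hc]; simp
      funext r
      have h3 : ∀ r ∈ Finset.univ, (0:ℝ) ≤ A.mulVec c r * A.mulVec c r :=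
        fun r _ => mul_self_nonneg _
      have := (Finset.sum_eq_zero_iff_of_nonneg h3).1 h2 r (Finset.mem_univ r)
      exact mul_self_eq_zero.1 this
    · intro hc
      rw [← Matrix.mulVec_mulVec, hc, Matrix.mulVec_zero]
  rw [Fintype.linearIndependent_iff]
  constructor
  · intro hli hdet
    obtain ⟨c, hc0, hc⟩ := Matrix.exists_mulVec_eq_zero_iff.2 hdet
    have : A.mulVec c = 0 := (key c).1 hc
    rw [mulVec_eq_sum_smul] at this
    exact hc0 (funext (hli c this))
  · intro hdet c hc i
    have hc' : A.mulVec c = 0 := by rw [mulVec_eq_sum_smul]; exact hc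
    by_contra hci
    have hc0 : c ≠ 0 := fun h => hci (by rw [h]; rfl)
    exact hdet (Matrix.exists_mulVec_eq_zero_iff.1 ⟨c, hc0, (key c).2 hc'⟩)

/-- For a square family, independence is equivalent to nonvanishing determinant. -/
lemma li_iff_det_square (u : Fin k → (Fin k → ℝ)) :
    LinearIndependent ℝ u ↔ (Matrix.of fun r i => u i r).det ≠ 0 := by
  rw [Fintype.linearIndependent_iff]
  constructor
  · intro hli hdet
    obtain ⟨c, hc0, hc⟩ := Matrix.exists_mulVec_eq_zero_iff.2 hdet
    rw [mulVec_eq_sum_smul] at hc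
    exact hc0 (funext (hli c hc))
  · intro hdet c hc i
    by_contra hci
    have hc0 : c ≠ 0 := fun h => hci (by rw [h]; rfl)
    refine hdet (Matrix.exists_mulVec_eq_zero_iff.1 ⟨c, hc0, ?_⟩)
    rw [mulVec_eq_sum_smul]; exact hc

/-- The "degenerate set", where the vectors `w i (t i)` are linearly dependent, is null. -/
lemma badSet_null : ∀ (m : ℕ), m ≤ k → ∀ w : Fin m → ℝ → (Fin k → ℝ),
    (∀ i, GoodCurve k (w i)) →
    volume {t : Fin m → ℝ | (∀ i, t i ∈ Set.Icc (0:ℝ) 1) ∧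
      ¬ LinearIndependent ℝ (fun i => w i (t i))} = 0 := by
  intro m
  induction m with
  | zero =>
    intro _ w _
    have : {t : Fin 0 → ℝ | (∀ i, t i ∈ Set.Icc (0:ℝ) 1) ∧
        ¬ LinearIndependent ℝ (fun i => w i (t i))} = ∅ := by
      ext t
      simp only [Set.mem_setOf_eq, Set.mem_empty_iff_false, iff_false, not_and]
      intro _ hne
      exact hne (linearIndependent_empty_type)
    rw [this, measure_empty]
  | succ m ih =>
    intro hmk w hw
    have hmk' : m < k := hmk
    set D : Set (Fin (m+1) → ℝ) := {t | (∀ i, t i ∈ Set.Icc (0:ℝ) 1) ∧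
      ¬ LinearIndependent ℝ (fun i => w i (t i))} with hD
    -- measurability of D
    set cube : Set (Fin (m+1) → ℝ) := Set.univ.pi fun _ => Set.Icc (0:ℝ) 1 with hcube
    have hcube_cl : IsClosed cube := isClosed_set_pi fun i _ => isClosed_Icc
    set g : (Fin (m+1) → ℝ) → ℝ := fun t =>
      ((Matrix.of fun r i => w i (t i) r)ᵀ * (Matrix.of fun r i => w i (t i) r)).det with hg
    have hgc : ContinuousOn g cube := by
      have hM : ContinuousOn (fun t : Fin (m+1) → ℝ =>
          ((Matrix.of fun r i => w i (t i) r)ᵀ * (Matrix.of fun r i => w i (t i) r))) cube := by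
        apply continuousOn_pi.2
        intro i
        apply continuousOn_pi.2
        intro j
        have : (fun t : Fin (m+1) → ℝ =>
            ((Matrix.of fun r i => w i (t i) r)ᵀ * (Matrix.of fun r i => w i (t i) r)) i j)
            = fun t => ∑ r, w i (t i) r * w j (t j) r := by
          funext t
          simp [Matrix.mul_apply, Matrix.transpose_apply]
        rw [this]
        apply continuousOn_finset_sum
        intro r _
        have h1 : ContinuousOn (fun t : Fin (m+1) → ℝ => w i (t i) r) cube := by
          apply ContinuousOn.comp ((continuous_apply r).comp_continuousOn (hw i).1)
            (continuous_apply i).continuousOn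
          intro t ht
          exact ht i (Set.mem_univ i)
        have h2 : ContinuousOn (fun t : Fin (m+1) → ℝ => w j (t j) r) cube := by
          apply ContinuousOn.comp ((continuous_apply r).comp_continuousOn (hw j).1)
            (continuous_apply j).continuousOn
          intro t ht
          exact ht j (Set.mem_univ j)
        exact h1.mul h2
      exact (continuous_id.matrix_det).comp_continuousOn hM
    have hDeq : D = cube ∩ g ⁻¹' {0} := by
      ext t
      simp only [hD, Set.mem_setOf_eq, Set.mem_inter_iff, Set.mem_preimage,
        Set.mem_singleton_iff, hcube, Set.mem_univ_pi]
      constructor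
      · rintro ⟨h1, h2⟩
        refine ⟨h1, ?_⟩
        by_contra h0
        exact h2 ((li_iff_gram _).2 h0)
      · rintro ⟨h1, h2⟩
        refine ⟨h1, fun hli => ?_⟩
        exact ((li_iff_gram _).1 hli) h2
    have hDmeas : MeasurableSet D := by
      rw [hDeq]
      exact (hgc.preimage_isClosed_of_isClosed hcube_cl isClosed_singleton).measurableSet
    -- split off the last coordinate
    set e := MeasurableEquiv.piFinSuccAbove (fun _ : Fin (m+1) => ℝ) (Fin.last m) with he
    have hmp : MeasurePreserving e (Measure.pi fun _ => volume)
        ((volume : Measure ℝ).prod (Measure.pi fun _ => volume)) :=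
      measurePreserving_piFinSuccAbove (fun _ : Fin (m+1) => volume) (Fin.last m)
    have hA1 : MeasurableSet (e.symm ⁻¹' D) := e.symm.measurable hDmeas
    have hvol : volume D = ((volume : Measure ℝ).prod (Measure.pi fun _ => volume))
        (e.symm ⁻¹' D) := by
      rw [(hmp.symm e).measure_preimage hDmeas.nullMeasurableSet]
      rw [MeasureTheory.volume_pi]
    rw [hvol]
    have hswap : ((volume : Measure ℝ).prod (Measure.pi fun _ : Fin m => volume)) (e.symm ⁻¹' D)
        = ((Measure.pi fun _ : Fin m => volume).prod (volume : Measure ℝ))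
            (Prod.swap ⁻¹' (e.symm ⁻¹' D)) := by
      conv_lhs => rw [← Measure.prod_swap]
      rw [Measure.map_apply measurable_swap hA1]
    rw [hswap]
    have hS : MeasurableSet (Prod.swap ⁻¹' (e.symm ⁻¹' D)) := measurable_swap hA1
    rw [Measure.measure_prod_null hS]
    have key : ∀ (y : Fin m → ℝ) (x : ℝ),
        (y, x) ∈ Prod.swap ⁻¹' (e.symm ⁻¹' D) ↔ Fin.snoc y x ∈ D := by
      intro y x
      have hsymm : e.symm (x, y) = Fin.snoc y x := by
        show (Fin.insertNthEquiv (fun _ => ℝ) (Fin.last m)) (x, y) = Fin.snoc y x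
        simp [Fin.insertNthEquiv, Fin.insertNth_last']
      simp only [Set.mem_preimage, Prod.swap_prod_mk, hsymm]
    have hbad := ih (le_of_lt hmk') (fun j => w (Fin.castSucc j)) (fun j => hw (Fin.castSucc j))
    rw [MeasureTheory.volume_pi] at hbad
    filter_upwards [measure_eq_zero_iff_ae_notMem.1 hbad] with y hy
    show volume (Prod.mk y ⁻¹' (Prod.swap ⁻¹' (e.symm ⁻¹' D))) = 0
    have hslice : Prod.mk y ⁻¹' (Prod.swap ⁻¹' (e.symm ⁻¹' D))
        = {x : ℝ | Fin.snoc y x ∈ D} := by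
      ext x
      exact key y x
    rw [hslice]
    by_cases hy1 : ∀ j, y j ∈ Set.Icc (0:ℝ) 1
    · have hli : LinearIndependent ℝ (fun j : Fin m => w (Fin.castSucc j) (y j)) := by
        by_contra hnli
        exact hy ⟨hy1, hnli⟩
      obtain ⟨v, hv0, hvperp⟩ := exists_perp hmk' (fun j => w (Fin.castSucc j) (y j))
      apply measure_mono_null _ ((hw (Fin.last m)).2 v hv0)
      intro x hx
      obtain ⟨hx1, hx2⟩ := hx
      have hfam : (fun i : Fin (m+1) => w i ((Fin.snoc y x : Fin (m+1) → ℝ) i)) =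
          Fin.snoc (fun j : Fin m => w (Fin.castSucc j) (y j)) (w (Fin.last m) x) := by
        funext i
        refine Fin.lastCases ?_ (fun j => ?_) i
        · simp
        · simp
      rw [hfam, linearIndependent_fin_snoc] at hx2
      have hmem : w (Fin.last m) x ∈
          Submodule.span ℝ (Set.range fun j => w (Fin.castSucc j) (y j)) := by
        by_contra hmem
        exact hx2 ⟨hli, hmem⟩
      refine ⟨?_, hvperp _ hmem⟩
      have := hx1 (Fin.last m)
      rwa [Fin.snoc_last] at this
    · have hempty : {x : ℝ | Fin.snoc y x ∈ D} = ∅ := by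
        ext x
        simp only [Set.mem_setOf_eq, Set.mem_empty_iff_false, iff_false]
        intro hx
        obtain ⟨j, hj⟩ := not_forall.1 hy1
        have := hx.1 (Fin.castSucc j)
        rw [Fin.snoc_castSucc] at this
        exact hj this
      rw [hempty, measure_empty]

/-- If `f` is continuous on a measurable set `s`, preimages of measurable sets intersected
with `s` are measurable. -/
lemma measurableSet_inter_preimage {α β : Type*} [MeasurableSpace α] [TopologicalSpace α]
    [BorelSpace α] [MeasurableSpace β] [TopologicalSpace β] [BorelSpace β]
    {f : α → β} {s : Set α} (hs : MeasurableSet s) (hf : ContinuousOn f s)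
    {N : Set β} (hN : MeasurableSet N) : MeasurableSet (s ∩ f ⁻¹' N) := by
  have hrestrict : Continuous (s.restrict f) := continuousOn_iff_continuous_restrict.1 hf
  have h1 : MeasurableSet ((s.restrict f) ⁻¹' N) := hrestrict.measurable hN
  have h2 : s ∩ f ⁻¹' N = (↑) '' ((s.restrict f) ⁻¹' N) := by
    ext x
    constructor
    · rintro ⟨hxs, hxN⟩
      exact ⟨⟨x, hxs⟩, hxN, rfl⟩
    · rintro ⟨⟨y, hy⟩, hyN, rfl⟩
      exact ⟨hy, hyN⟩
  rw [h2]
  exact (MeasurableEmbedding.subtype_coe hs).measurableSet_image' h1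

/-- A set on which a function is differentiable with invertible derivative and which is mapped
into a null set must itself be null. -/
lemma null_of_image_null {E : Type*} [NormedAddCommGroup E] [NormedSpace ℝ E]
    [FiniteDimensional ℝ E] [MeasurableSpace E] [BorelSpace E] [Nontrivial E]
    (μ : Measure E) [μ.IsAddHaarMeasure]
    {f : E → E} {f' : E → E →L[ℝ] E} {s : Set E} (hs : MeasurableSet s)
    (hf' : ∀ x ∈ s, HasFDerivWithinAt f (f' x) s x) (hdet : ∀ x ∈ s, (f' x).det ≠ 0)
    {N : Set E} (hN : μ N = 0) : μ (s ∩ f ⁻¹' N) = 0 := by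
  obtain ⟨N', hNsub, hN'meas, hN'⟩ := exists_measurable_superset_of_null hN
  apply measure_mono_null (Set.inter_subset_inter_right s (Set.preimage_mono hNsub))
  have hcont : ContinuousOn f s := fun x hx => (hf' x hx).continuousWithinAt
  set r : (E →L[ℝ] E) → NNReal := fun A =>
    if h : A.det ≠ 0 then ‖((A.toContinuousLinearEquivOfDetNeZero h).symm : E →L[ℝ] E)‖₊⁻¹ / 2
    else 1 with hr
  have hsymm_ne : ∀ (A : E →L[ℝ] E) (h : A.det ≠ 0),
      ‖((A.toContinuousLinearEquivOfDetNeZero h).symm : E →L[ℝ] E)‖₊ ≠ 0 := by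
    intro A h h0
    set B := A.toContinuousLinearEquivOfDetNeZero h
    have hB0 : ((B.symm : E →L[ℝ] E)) = 0 := nnnorm_eq_zero.1 h0
    obtain ⟨x, hx⟩ := exists_ne (0 : E)
    apply hx
    calc x = B.symm (B x) := (B.symm_apply_apply x).symm
      _ = 0 := by rw [show B.symm (B x) = ((B.symm : E →L[ℝ] E)) (B x) from rfl, hB0]; rfl
  have rpos : ∀ A, r A ≠ 0 := by
    intro A
    simp only [hr]
    by_cases h : A.det ≠ 0
    · rw [dif_pos h]
      simp only [ne_eq, div_eq_zero_iff, inv_eq_zero]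
      push_neg
      exact ⟨hsymm_ne A h, by norm_num⟩
    · rw [dif_neg h]; norm_num
  obtain ⟨t, A, t_disj, t_meas, t_cover, t_approx, hA⟩ :=
    exists_partition_approximatesLinearOn_of_hasFDerivWithinAt f s f' hf' r rpos
  have hsub : s ∩ f ⁻¹' N' ⊆ ⋃ n, (s ∩ t n) ∩ f ⁻¹' N' := by
    intro x hx
    obtain ⟨n, hn⟩ := Set.mem_iUnion.1 (t_cover hx.1)
    exact Set.mem_iUnion.2 ⟨n, ⟨hx.1, hn⟩, hx.2⟩
  apply measure_mono_null hsub
  apply measure_iUnion_null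
  intro n
  rcases Set.eq_empty_or_nonempty (s ∩ t n) with hst | hst
  · rw [hst, Set.empty_inter, measure_empty]
  have hs_ne : s.Nonempty := ⟨hst.choose, hst.choose_spec.1⟩
  obtain ⟨y, hy, hAn⟩ := hA hs_ne n
  have hdetn : (A n).det ≠ 0 := by rw [hAn]; exact hdet y hy
  set B := (A n).toContinuousLinearEquivOfDetNeZero hdetn with hB
  have happrox : ApproximatesLinearOn f (B : E →L[ℝ] E) (s ∩ t n) (r (A n)) := by
    rw [hB, ContinuousLinearMap.coe_toContinuousLinearEquivOfDetNeZero]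
    exact t_approx n
  have hrA : r (A n) = ‖((B.symm : E →L[ℝ] E))‖₊⁻¹ / 2 := by
    simp only [hr]
    rw [dif_pos hdetn]
  have hinj : Set.InjOn f (s ∩ t n) := by
    apply happrox.injOn
    right
    rw [hrA]
    exact NNReal.half_lt_self (by simpa [inv_eq_zero] using hsymm_ne (A n) hdetn)
  set u := (s ∩ t n) ∩ f ⁻¹' N' with hu
  have hu_meas : MeasurableSet u := by
    have hsN := measurableSet_inter_preimage hs hcont hN'meas
    have heq : u = (s ∩ f ⁻¹' N') ∩ t n := by
      rw [hu]; ext x; constructor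
      · rintro ⟨⟨h1, h2⟩, h3⟩; exact ⟨⟨h1, h3⟩, h2⟩
      · rintro ⟨⟨h1, h3⟩, h2⟩; exact ⟨⟨h1, h2⟩, h3⟩
    rw [heq]
    exact hsN.inter (t_meas n)
  have hu_sub : u ⊆ s := fun x hx => hx.1.1
  have hu_f' : ∀ x ∈ u, HasFDerivWithinAt f (f' x) u x :=
    fun x hx => (hf' x (hu_sub hx)).mono hu_sub
  have harea := lintegral_abs_det_fderiv_eq_addHaar_image μ hu_meas hu_f'
    (hinj.mono (fun x hx => hx.1))
  have himg : μ (f '' u) = 0 := by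
    apply measure_mono_null _ hN'
    rintro z ⟨x, hx, rfl⟩
    exact hx.2
  rw [himg] at harea
  have haem := aemeasurable_ofReal_abs_det_fderivWithin μ hu_meas hu_f'
  rw [lintegral_eq_zero_iff' haem] at harea
  have hfalse : ∀ᵐ x ∂μ.restrict u, False := by
    filter_upwards [harea, ae_restrict_mem hu_meas] with x h1 h2
    have hd : (f' x).det ≠ 0 := hdet x (hu_sub h2)
    have : ENNReal.ofReal |(f' x).det| ≠ 0 := by
      simp only [ne_eq, ENNReal.ofReal_eq_zero, not_le]
      exact abs_pos.2 hd
    exact this h1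
  have h0 : μ.restrict u Set.univ = 0 := by
    rw [ae_iff] at hfalse
    simpa using hfalse
  rw [Measure.restrict_apply_univ] at h0
  exact h0

/-- The transformed derivative curves are good. -/
lemma goodCurve_of_tnp (ψ : ℝ → (Fin k → ℝ)) (h : TotallyNonPlanar k ψ)
    (M : Matrix (Fin k) (Fin k) ℝ) (hM : IsUnit M) :
    GoodCurve k (fun s => M.mulVec (curveDeriv k ψ s)) := by
  constructor
  · have hd : ContinuousOn (curveDeriv k ψ) (Set.Icc 0 1) :=
      h.1.continuousOn_derivWithin (uniqueDiffOn_Icc zero_lt_one) le_rfl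
    exact (LinearMap.toContinuousLinearMap M.mulVecLin).continuous.comp_continuousOn hd
  · intro v hv
    set v' := Matrix.vecMul v M with hv'
    have hv'0 : v' ≠ 0 := by
      intro h0
      apply hv
      have hMdet : IsUnit M.det := (Matrix.isUnit_iff_isUnit_det M).1 hM
      have h1 := congrArg (fun u => Matrix.vecMul u M⁻¹) h0
      simp only [hv', Matrix.vecMul_vecMul, Matrix.zero_vecMul] at h1
      rwa [Matrix.mul_nonsing_inv M hMdet, Matrix.vecMul_one] at h1
    have hset : {s : ℝ | s ∈ Set.Icc (0:ℝ) 1 ∧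
          ∑ j, M.mulVec (curveDeriv k ψ s) j * v j = 0}
        = {s : ℝ | s ∈ Set.Icc (0:ℝ) 1 ∧ ∑ i, curveDeriv k ψ s i * v' i = 0} := by
      ext s
      have : (∑ j, M.mulVec (curveDeriv k ψ s) j * v j)
          = ∑ i, curveDeriv k ψ s i * v' i := by
        simp only [Matrix.mulVec, Matrix.vecMul, dotProduct, hv']
        simp only [Finset.sum_mul, Finset.mul_sum]
        rw [Finset.sum_comm]
        apply Finset.sum_congr rfl
        intro i _
        apply Finset.sum_congr rfl
        intro j _
        ring
      simp [this]
    rw [hset]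
    exact h.2 v' hv'0

lemma hasFDeriv_main (ψ : Fin k → ℝ → (Fin k → ℝ)) (h : ∀ i, TotallyNonPlanar k (ψ i))
    (M : Fin k → Matrix (Fin k) (Fin k) ℝ) {t : Fin k → ℝ}
    (ht : t ∈ Set.univ.pi fun _ : Fin k => Set.Icc (0:ℝ) 1) :
    HasFDerivWithinAt (fun t : Fin k → ℝ => ∑ i, (M i).mulVec (ψ i (t i)))
      (∑ i, (LinearMap.toContinuousLinearMap (M i).mulVecLin).comp
        ((((1:ℝ →L[ℝ] ℝ).smulRight (curveDeriv k (ψ i) (t i))).comp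
          (ContinuousLinearMap.proj i))))
      (Set.univ.pi fun _ : Fin k => Set.Icc (0:ℝ) 1) t := by
  apply HasFDerivWithinAt.fun_sum
  intro i _
  have h1 := (ContinuousLinearMap.proj (R := ℝ) (φ := fun _ : Fin k => ℝ) i).hasFDerivWithinAt
      (s := Set.univ.pi fun _ : Fin k => Set.Icc (0:ℝ) 1) (x := t)
  have hti : t i ∈ Set.Icc (0:ℝ) 1 := ht i (Set.mem_univ i)
  have h2 : HasDerivWithinAt (ψ i) (curveDeriv k (ψ i) (t i)) (Set.Icc 0 1) (t i) :=
    ((h i).1.differentiableOn one_ne_zero (t i) hti).hasDerivWithinAt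
  have h3 := (h2.hasFDerivWithinAt).comp t h1 (fun u hu => hu i (Set.mem_univ i))
  exact ((LinearMap.toContinuousLinearMap (M i).mulVecLin).hasFDerivAt).comp_hasFDerivWithinAt t h3

lemma det_main (ψ : Fin k → ℝ → (Fin k → ℝ)) (M : Fin k → Matrix (Fin k) (Fin k) ℝ)
    (t : Fin k → ℝ) :
    (∑ i, (LinearMap.toContinuousLinearMap (M i).mulVecLin).comp
        ((((1:ℝ →L[ℝ] ℝ).smulRight (curveDeriv k (ψ i) (t i))).comp
          (ContinuousLinearMap.proj i)))).det
      = (Matrix.of fun r i => (M i).mulVec (curveDeriv k (ψ i) (t i)) r).det := by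
  classical
  have hLt : (∑ i, (LinearMap.toContinuousLinearMap (M i).mulVecLin).comp
        ((((1:ℝ →L[ℝ] ℝ).smulRight (curveDeriv k (ψ i) (t i))).comp
          (ContinuousLinearMap.proj i))))
      = LinearMap.toContinuousLinearMap
          (Matrix.toLin' (Matrix.of fun r i => (M i).mulVec (curveDeriv k (ψ i) (t i)) r)) := by
    apply ContinuousLinearMap.ext
    intro u
    funext r
    have lhs : (∑ i, (LinearMap.toContinuousLinearMap (M i).mulVecLin).comp
        ((((1:ℝ →L[ℝ] ℝ).smulRight (curveDeriv k (ψ i) (t i))).comp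
          (ContinuousLinearMap.proj i)))) u r
        = ∑ i, u i * ((M i).mulVec (curveDeriv k (ψ i) (t i)) r) := by
      rw [ContinuousLinearMap.sum_apply, Finset.sum_apply]
      apply Finset.sum_congr rfl
      intro i _
      simp only [ContinuousLinearMap.comp_apply, ContinuousLinearMap.proj_apply,
        ContinuousLinearMap.smulRight_apply, ContinuousLinearMap.one_apply,
        LinearMap.coe_toContinuousLinearMap', Matrix.mulVecLin_apply, Matrix.mulVec_smul,
        Pi.smul_apply, smul_eq_mul]
    have rhs : LinearMap.toContinuousLinearMap
        (Matrix.toLin' (Matrix.of fun r i => (M i).mulVec (curveDeriv k (ψ i) (t i)) r)) u r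
        = ∑ i, ((M i).mulVec (curveDeriv k (ψ i) (t i)) r) * u i := by
      simp [Matrix.toLin'_apply, Matrix.mulVec, dotProduct]
    rw [lhs, rhs]
    apply Finset.sum_congr rfl
    intro i _
    ring
  rw [hLt]
  show LinearMap.det _ = _
  rw [LinearMap.coe_toContinuousLinearMap]
  exact LinearMap.det_toLin' _

end Aux

/-- If `ψ₁, …, ψ_k : [0,1] → ℝ^k` are totally non-planar and
`M₁, …, M_k ∈ GL(k,ℝ)`, then the pushforward of Lebesgue measure on `[0,1]^k` under
`Ψ(t₁,…,t_k) = Σᵢ Mᵢ ψᵢ(tᵢ)` is absolutely continuous with respect to Lebesgue measure. -/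
theorem stmt7 (k : ℕ) (ψ : Fin k → ℝ → (Fin k → ℝ))
    (h : ∀ i, TotallyNonPlanar k (ψ i))
    (M : Fin k → Matrix (Fin k) (Fin k) ℝ) (hM : ∀ i, IsUnit (M i)) :
    Measure.map (fun t : Fin k → ℝ => ∑ i, (M i).mulVec (ψ i (t i)))
        (volume.restrict (Set.univ.pi fun _ : Fin k => Set.Icc (0:ℝ) 1)) ≪ volume := by
  classical
  by_cases hk : k = 0
  · subst hk
    refine Measure.AbsolutelyContinuous.mk fun N hNm hN0 => ?_
    have hN : N = ∅ := by
      rcases N.eq_empty_or_nonempty with hN | hN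
      · exact hN
      · exfalso
        obtain ⟨y, hy⟩ := hN
        have huniv : N = Set.univ := by
          ext x
          simp only [Set.mem_univ, iff_true]
          rwa [Subsingleton.elim x y]
        rw [huniv] at hN0
        have hone : (volume : Measure (Fin 0 → ℝ)) Set.univ = 1 := by
          rw [MeasureTheory.volume_pi, Measure.pi_univ]
          simp
        rw [hone] at hN0
        exact one_ne_zero hN0
    rw [hN]
    exact measure_empty
  haveI : Nonempty (Fin k) := ⟨⟨0, Nat.pos_of_ne_zero hk⟩⟩
  set w : Fin k → ℝ → (Fin k → ℝ) := fun i s => (M i).mulVec (curveDeriv k (ψ i) s) with hw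
  have hgood : ∀ i, GoodCurve k (w i) := fun i => goodCurve_of_tnp (ψ i) (h i) (M i) (hM i)
  set cube : Set (Fin k → ℝ) := Set.univ.pi fun _ => Set.Icc (0:ℝ) 1 with hcube
  have hcube_meas : MeasurableSet cube := MeasurableSet.univ_pi fun i => measurableSet_Icc
  have hcube_cl : IsClosed cube := isClosed_set_pi fun i _ => isClosed_Icc
  set Ψ : (Fin k → ℝ) → (Fin k → ℝ) := fun t => ∑ i, (M i).mulVec (ψ i (t i)) with hΨ
  set L : (Fin k → ℝ) → (Fin k → ℝ) →L[ℝ] (Fin k → ℝ) := fun t =>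
    ∑ i, (LinearMap.toContinuousLinearMap (M i).mulVecLin).comp
      ((((1:ℝ →L[ℝ] ℝ).smulRight (curveDeriv k (ψ i) (t i))).comp
        (ContinuousLinearMap.proj i))) with hL
  have hLD : ∀ t ∈ cube, HasFDerivWithinAt Ψ (L t) cube t :=
    fun t ht => hasFDeriv_main ψ h M ht
  have hcont : ContinuousOn Ψ cube := fun t ht => (hLD t ht).continuousWithinAt
  -- the bad set
  set Bset : Set (Fin k → ℝ) := {t | (∀ i, t i ∈ Set.Icc (0:ℝ) 1) ∧
    ¬ LinearIndependent ℝ (fun i => w i (t i))} with hBset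
  have hB_null : volume Bset = 0 := badSet_null k le_rfl w hgood
  -- the good set
  set G : Set (Fin k → ℝ) := cube ∩
    {t | (Matrix.of fun r i => w i (t i) r).det ≠ 0} with hG
  have hdetA_cont : ContinuousOn (fun t : Fin k → ℝ =>
      (Matrix.of fun r i => w i (t i) r).det) cube := by
    have hMc : ContinuousOn (fun t : Fin k → ℝ =>
        (Matrix.of fun r i => w i (t i) r : Matrix (Fin k) (Fin k) ℝ)) cube := by
      apply continuousOn_pi.2
      intro r
      apply continuousOn_pi.2
      intro i
      apply ContinuousOn.comp ((continuous_apply r).comp_continuousOn (hgood i).1)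
        (continuous_apply i).continuousOn
      intro t ht
      exact ht i (Set.mem_univ i)
    exact (continuous_id.matrix_det).comp_continuousOn hMc
  have hG_meas : MeasurableSet G := by
    have hclosed : IsClosed (cube ∩ (fun t : Fin k → ℝ =>
        (Matrix.of fun r i => w i (t i) r).det) ⁻¹' {0}) :=
      hdetA_cont.preimage_isClosed_of_isClosed hcube_cl isClosed_singleton
    have : G = cube \ (cube ∩ (fun t : Fin k → ℝ =>
        (Matrix.of fun r i => w i (t i) r).det) ⁻¹' {0}) := by
      ext t
      simp only [hG, Set.mem_inter_iff, Set.mem_setOf_eq, Set.mem_diff, Set.mem_preimage,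
        Set.mem_singleton_iff]
      tauto
    rw [this]
    exact hcube_meas.diff hclosed.measurableSet
  have hG_sub : G ⊆ cube := fun t ht => ht.1
  -- cover of the cube
  have hBG : cube ⊆ Bset ∪ G := by
    intro t ht
    by_cases hli : LinearIndependent ℝ (fun i => w i (t i))
    · right
      exact ⟨ht, (li_iff_det_square _).1 hli⟩
    · left
      refine ⟨fun i => ht i (Set.mem_univ i), hli⟩
  -- conclusion
  refine Measure.AbsolutelyContinuous.mk fun N hNm hN0 => ?_
  have hae : AEMeasurable Ψ (volume.restrict cube) := hcont.aemeasurable hcube_meas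
  rw [Measure.map_apply_of_aemeasurable hae hNm, Measure.restrict_apply' hcube_meas]
  have hGN : volume (G ∩ Ψ ⁻¹' N) = 0 := by
    apply null_of_image_null volume hG_meas
      (fun x hx => (hLD x (hG_sub hx)).mono hG_sub)
      (fun x hx => by rw [det_main ψ M x]; exact hx.2) hN0
  apply measure_mono_null _ (measure_union_null hB_null hGN)
  intro t ht
  rcases hBG ht.2 with hB | hG'
  · exact Or.inl hB
  · exact Or.inr ⟨hG', ht.1⟩
end
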